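/- Let γ be a nonzero rational number with t = (γ⁴ - 4)/(2γ²) nonzero, and set A = (t² + 4)/64. Then the point R = ( (γ⁴ + 4)(γ² + 2γ + 2)/(64γ³), (γ⁴ + 4)²(γ² + 2γ + 2)/(1024γ⁵) ) lies on the curve E' and has order exactly 8 in the group E'(ℚ). -/

import Mathlib

open WeierstrassCurve

/-- The elliptic curve `E' : Y² + XY + AY = X³ + AX²` with `A = (t² + 4)/64`. -/
noncomputable def Ecurve' (t : ℚ) : WeierstrassCurve.Affine ℚ :=
  { a₁ := 1, a₂ := (t ^ 2 + 4) / 64, a₃ := (t ^ 2 + 4) / 64, a₄ := 0, a₆ := 0 }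

private lemma some_eq_some {F : Type*} [Field F] {W : WeierstrassCurve.Affine F}
    {x₁ y₁ x₂ y₂ : F} {h₁ : W.Nonsingular x₁ y₁} {h₂ : W.Nonsingular x₂ y₂}
    (hx : x₁ = x₂) (hy : y₁ = y₂) :
    Affine.Point.some _ _ h₁ = Affine.Point.some _ _ h₂ := by
  subst hx hy; rfl

set_option maxHeartbeats 2000000 in
theorem stmt_10 (γ t : ℚ) (hγ : γ ≠ 0) (htγ : t = (γ ^ 4 - 4) / (2 * γ ^ 2))
    (ht : t ≠ 0) :
    ∃ h : (Ecurve' t).Nonsingular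
        ((γ ^ 4 + 4) * (γ ^ 2 + 2 * γ + 2) / (64 * γ ^ 3))
        ((γ ^ 4 + 4) ^ 2 * (γ ^ 2 + 2 * γ + 2) / (1024 * γ ^ 5)),
      addOrderOf (Affine.Point.some _ _ h) = 8 := by
  subst htγ
  set T : ℚ := (γ ^ 4 - 4) / (2 * γ ^ 2) with hT
  set x₀ : ℚ := (γ ^ 4 + 4) * (γ ^ 2 + 2 * γ + 2) / (64 * γ ^ 3) with hx₀
  set y₀ : ℚ := (γ ^ 4 + 4) ^ 2 * (γ ^ 2 + 2 * γ + 2) / (1024 * γ ^ 5) with hy₀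
  have hA : (T ^ 2 + 4) / 64 ≠ 0 := by positivity
  -- P is not 2-torsion
  have hd0 : y₀ ≠ (Ecurve' T).negY x₀ y₀ := by
    simp only [Ecurve', Affine.negY, hT, hx₀, hy₀]
    intro h
    field_simp at h
    have h' : ((γ + 1) ^ 2 + 1) ^ 2 * ((γ ^ 2 + 2) * ((γ ^ 4 + 4) * (33554432 * γ ^ 12))) = 0 := by
      linear_combination 65536 * γ ^ 12 * h
    exact absurd h' (mul_ne_zero (by positivity) (mul_ne_zero (by positivity)
      (mul_ne_zero (by positivity) (mul_ne_zero (by norm_num) (pow_ne_zero _ hγ)))))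
  -- P lies on the curve and is nonsingular
  have h0 : (Ecurve' T).Nonsingular x₀ y₀ := by
    rw [Affine.nonsingular_iff, Affine.equation_iff]
    constructor
    · simp only [Ecurve', hT, hx₀, hy₀]
      field_simp
      ring
    · right
      have := hd0
      simpa only [Affine.negY, Ecurve'] using this
  -- slope at P
  have hDne : y₀ - (Ecurve' T).negY x₀ y₀ ≠ 0 := sub_ne_zero.mpr hd0
  have hL : (Ecurve' T).slope x₀ x₀ y₀ y₀
      = (γ ^ 4 + 4 * γ ^ 3 - 8 * γ ^ 2 + 8 * γ + 4) / (16 * γ ^ 2) := by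
    rw [Affine.slope_of_Y_ne rfl hd0, div_eq_div_iff hDne (by positivity)]
    simp only [Ecurve', Affine.negY, hT, hx₀, hy₀]
    field_simp
    ring
  -- 2P = (0, 0)
  have hX2 : (Ecurve' T).addX x₀ x₀ ((Ecurve' T).slope x₀ x₀ y₀ y₀) = 0 := by
    rw [hL]
    simp only [Ecurve', Affine.addX, hT, hx₀]
    field_simp
    ring
  have hY2 : (Ecurve' T).addY x₀ x₀ y₀ ((Ecurve' T).slope x₀ x₀ y₀ y₀) = 0 := by
    rw [Affine.addY, Affine.negAddY, hX2, hL]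
    simp only [Ecurve', Affine.negY, hT, hx₀, hy₀]
    field_simp
    ring
  have h2 : (Ecurve' T).Nonsingular 0 0 := by
    have := Affine.nonsingular_add h0 h0 fun hxy => hd0 hxy.right
    rwa [hX2, hY2] at this
  have e2 : Affine.Point.some _ _ h0 + Affine.Point.some _ _ h0 = Affine.Point.some _ _ h2 :=
    (Affine.Point.add_self_of_Y_ne hd0).trans (some_eq_some hX2 hY2)
  -- 2P is not 2-torsion
  have hd2 : (0 : ℚ) ≠ (Ecurve' T).negY 0 0 := by
    simp only [Ecurve', Affine.negY]
    intro h
    apply hA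
    linarith
  -- slope at 2P
  have hL2 : (Ecurve' T).slope 0 0 0 0 = 0 := by
    rw [Affine.slope_of_Y_ne rfl hd2]
    simp [Ecurve', Affine.negY]
  -- 4P = (-A, 0)
  have hX4 : (Ecurve' T).addX 0 0 ((Ecurve' T).slope 0 0 0 0) = -((T ^ 2 + 4) / 64) := by
    rw [hL2]
    simp only [Ecurve', Affine.addX]
    ring
  have hY4 : (Ecurve' T).addY 0 0 0 ((Ecurve' T).slope 0 0 0 0) = 0 := by
    rw [Affine.addY, Affine.negAddY, hX4, hL2]
    simp only [Ecurve', Affine.negY]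
    ring
  have h4 : (Ecurve' T).Nonsingular (-((T ^ 2 + 4) / 64)) 0 := by
    have := Affine.nonsingular_add h2 h2 fun hxy => hd2 hxy.right
    rwa [hX4, hY4] at this
  have e4 : Affine.Point.some _ _ h2 + Affine.Point.some _ _ h2 = Affine.Point.some _ _ h4 :=
    (Affine.Point.add_self_of_Y_ne hd2).trans (some_eq_some hX4 hY4)
  -- 4P is 2-torsion
  have e8 : Affine.Point.some _ _ h4 + Affine.Point.some _ _ h4 = 0 :=
    Affine.Point.add_self_of_Y_eq (by simp only [Ecurve', Affine.negY]; ring)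
  refine ⟨h0, ?_⟩
  set P := Affine.Point.some _ _ h0 with hP
  have h4P : (4 : ℕ) • P = Affine.Point.some _ _ h4 := by
    rw [show (4 : ℕ) = 2 * 2 from rfl, mul_smul, two_nsmul, two_nsmul, e2, e4]
  have h8P : (8 : ℕ) • P = 0 := by
    rw [show (8 : ℕ) = 2 * 4 from rfl, mul_smul, h4P, two_nsmul, e8]
  have hord : addOrderOf P = 2 ^ (2 + 1) := by
    apply addOrderOf_eq_prime_pow
    · rw [show (2 : ℕ) ^ 2 = 4 from rfl, h4P]
      exact Affine.Point.some_ne_zero h4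
    · rw [show (2 : ℕ) ^ (2 + 1) = 8 from rfl]
      exact h8P
  rw [hord]
  norm_num
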